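/- Let Δ₁, Δ₂, … be pairwise disjoint open subintervals of 𝕋 with centers c_j. There exist absolute constants C, c > 0 such that for every λ > 0, |{x ∈ 𝕋 : sup_{p>1} (∑_j (|Δ_j|/(|x−c_j|+|Δ_j|))^{q}) / (p ln ln(p+2)) > λ}| ≤ C exp(−cλ), where q = p/(p−1). -/

import Mathlib

open MeasureTheory Real

noncomputable def rr (a b : ℕ → ℝ) (j : ℕ) (x : ℝ) : ℝ :=
  (b j - a j) / (|x - (a j + b j) / 2| + (b j - a j))

noncomputable def SR (a b : ℕ → ℝ) (q : ℝ) (F : Finset ℕ) (x : ℝ) : ℝ :=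
  ∑ j ∈ F, if x ≤ a j then rr a b j x ^ q else 0

variable {a b : ℕ → ℝ} {j : ℕ}

lemma denom_pos (h : a j < b j) (x : ℝ) : 0 < |x - (a j + b j) / 2| + (b j - a j) := by
  have := abs_nonneg (x - (a j + b j) / 2); linarith

lemma rr_pos (h : a j < b j) (x : ℝ) : 0 < rr a b j x :=
  div_pos (by linarith) (denom_pos h x)

lemma rr_le_one (h : a j < b j) (x : ℝ) : rr a b j x ≤ 1 := by
  rw [rr, div_le_one (denom_pos h x)]
  have := abs_nonneg (x - (a j + b j) / 2); linarith

lemma rr_le (h : a j < b j) {x D : ℝ} (hD : 0 ≤ D) (hx : D ≤ a j - x) :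
    rr a b j x ≤ (b j - a j) / (D + (b j - a j)) := by
  have habs : a j - x ≤ |x - (a j + b j) / 2| := by
    rw [abs_sub_comm]
    refine le_trans ?_ (le_abs_self _); linarith
  exact div_le_div_of_nonneg_left (by linarith) (by linarith) (by linarith)

lemma rr_continuous (h : a j < b j) : Continuous (rr a b j) :=
  continuous_const.div
    (((continuous_id.sub continuous_const).abs).add continuous_const)
    (fun x => (denom_pos h x).ne')

lemma SR_measurable (hab : ∀ j, a j < b j) {q : ℝ} (hq : 0 ≤ q) (F : Finset ℕ) :
    Measurable (SR a b q F) := by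
  refine Finset.measurable_sum _ fun j _ => Measurable.ite measurableSet_Iic ?_ measurable_const
  exact ((rr_continuous (hab j)).rpow_const (fun x => Or.inr hq)).measurable

lemma SR_nonneg (hab : ∀ j, a j < b j) (q : ℝ) (F : Finset ℕ) (x : ℝ) :
    0 ≤ SR a b q F x := by
  refine Finset.sum_nonneg fun j _ => ?_
  split
  · exact Real.rpow_nonneg (rr_pos (hab j) x).le _
  · exact le_refl 0

lemma exp_le_aux {z γ : ℝ} (h0 : 0 ≤ z) (hz : z ≤ γ) (hγ : γ ≤ 1 / 60) :
    exp z ≤ 1 + 2 * z := by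
  have h1 : 1 - z ≤ exp (-z) := by have := Real.add_one_le_exp (-z); linarith
  have h3 : exp z ≤ exp (1/60 : ℝ) := Real.exp_le_exp.2 (by linarith)
  have h4 : exp (1/60 : ℝ) ≤ 2 := by
    rw [show (2:ℝ) = exp (Real.log 2) by rw [Real.exp_log]; norm_num]
    exact Real.exp_le_exp.2 (by nlinarith [Real.log_two_gt_d9])
  have h5 := Real.exp_pos z
  have h2 : exp (-z) * exp z = 1 := by rw [← Real.exp_add]; simp
  nlinarith [mul_le_mul_of_nonneg_left h1 h5.le]

lemma geom_bound {q : ℝ} (hq : 1 < q) :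
    ∑' k : ℕ, (((2:ℝ)⁻¹) ^ (q - 1)) ^ k ≤ 3 * (q / (q - 1)) := by
  set u := ((2:ℝ)⁻¹) ^ (q - 1) with hu
  have hu0 : 0 ≤ u := Real.rpow_nonneg (by norm_num) _
  have hu1 : u < 1 := Real.rpow_lt_one (by norm_num) (by norm_num) (by linarith)
  rw [tsum_geometric_of_lt_one hu0 hu1]
  have hl2 := Real.log_two_gt_d9
  set y := (q - 1) * Real.log 2 with hy
  have hy0 : 0 < y := by
    apply mul_pos (by linarith) (by nlinarith)
  -- u = exp (-y)
  have hue : u = Real.exp (-y) := by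
    rw [hu, Real.rpow_def_of_pos (by norm_num : (0:ℝ) < 2⁻¹), Real.log_inv, hy]
    ring_nf
  have hub : u * (1 + y) ≤ 1 := by
    rw [hue]
    have h1 : 1 + y ≤ Real.exp y := by have := Real.add_one_le_exp y; linarith
    have h2 : Real.exp (-y) * Real.exp y = 1 := by rw [← Real.exp_add]; simp
    nlinarith [Real.exp_pos (-y), Real.exp_pos y]
  -- 1 - u ≥ y/(1+y)
  have h1u : y / (1 + y) ≤ 1 - u := by
    rw [div_le_iff₀ (by linarith)]
    nlinarith
  have h1u0 : 0 < 1 - u := by linarith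
  have hkey : (1 - u)⁻¹ ≤ (1 + y) / y := by
    rw [inv_eq_one_div, div_le_div_iff₀ h1u0 hy0]
    nlinarith
  refine hkey.trans ?_
  have h3 : (0:ℝ) < q - 1 := by linarith
  have he : 3 * (q / (q - 1)) * ((q - 1) * Real.log 2) = 3 * q * Real.log 2 := by
    field_simp
  rw [div_le_iff₀ hy0, hy, he]
  nlinarith

lemma pow_calc {q : ℝ} (hq : 1 < q) (k : ℕ) {L : ℝ} (hL : 0 ≤ L) :
    (((2:ℝ) ^ k)⁻¹) ^ q * (2 * (2 ^ (k + 2) * L)) = 8 * L * ((((2:ℝ)⁻¹) ^ (q - 1)) ^ k) := by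
  have h2k : (0:ℝ) < 2 ^ k := by positivity
  have e1 : (((2:ℝ) ^ k)⁻¹) ^ q = (((2:ℝ) ^ k)⁻¹) ^ (q - 1) * (((2:ℝ) ^ k)⁻¹) ^ (1:ℝ) := by
    rw [← Real.rpow_add (by positivity)]; ring_nf
  have e2 : (((2:ℝ) ^ k)⁻¹) ^ (q - 1) = ((((2:ℝ)⁻¹) ^ (q - 1)) ^ k) := by
    rw [← inv_pow]
    rw [← Real.rpow_natCast ((2:ℝ)⁻¹) k, ← Real.rpow_natCast (((2:ℝ)⁻¹) ^ (q-1)) k,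
      ← Real.rpow_mul (by norm_num), ← Real.rpow_mul (by norm_num), mul_comm]
  rw [e1, e2, Real.rpow_one]
  have : ((2:ℝ) ^ (k + 2)) = 4 * 2 ^ k := by ring
  rw [this]
  field_simp
  ring

set_option maxHeartbeats 1000000 in
lemma lemW (hab : ∀ j, a j < b j)
    (hdisj : Pairwise fun i j => Disjoint (Set.Ioo (a i) (b i)) (Set.Ioo (a j) (b j)))
    {q γ : ℝ} (hq : 1 < q) (hγ0 : 0 < γ) (hγq : γ * (q / (q - 1)) ≤ 1 / 60)
    (F : Finset ℕ) : ∀ w v : ℝ, (∀ j ∈ F, b j ≤ v) →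
      ∫⁻ x in Set.Ioo w v, ENNReal.ofReal (exp (γ * SR a b q F x)) ≤
        ENNReal.ofReal (2 * (v - w)) := by
  have hq1 : (0:ℝ) < q - 1 := by linarith
  have hq' : (1:ℝ) ≤ q / (q - 1) := by rw [le_div_iff₀ hq1]; linarith
  have hγ60 : γ ≤ 1 / 60 := le_trans (by nlinarith) hγq
  induction F using Finset.strongInduction with
  | _ F ih =>
    intro w v hbv
    rcases le_or_gt v w with hvw | hwv
    · rw [Set.Ioo_eq_empty (not_lt.mpr hvw)]
      simp
    rcases F.eq_empty_or_nonempty with rfl | hne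
    · simp only [SR, Finset.sum_empty, mul_zero, Real.exp_zero, ENNReal.ofReal_one]
      rw [setLIntegral_one, Real.volume_Ioo]
      exact ENNReal.ofReal_le_ofReal (by linarith)
    obtain ⟨j0, hj0F, hmax⟩ := F.exists_max_image a hne
    set A := a j0 with hA
    set L := b j0 - a j0 with hLdef
    have hL : 0 < L := by rw [hLdef]; linarith [hab j0]
    have hb_erase : ∀ k ∈ F.erase j0, b k ≤ A := by
      intro k hk
      have hkj : k ≠ j0 := Finset.ne_of_mem_erase hk
      have hkF : k ∈ F := Finset.mem_of_mem_erase hk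
      by_contra hbk
      push_neg at hbk
      have hak : a k ≤ A := hmax k hkF
      have hmin : A < min (b k) (b j0) := lt_min hbk (hab j0)
      set z := (A + min (b k) (b j0)) / 2 with hz
      have hz1 : A < z := by rw [hz]; linarith
      have hzm : z < min (b k) (b j0) := by rw [hz]; linarith
      exact Set.disjoint_left.mp (hdisj hkj)
        ⟨lt_of_le_of_lt hak hz1, lt_of_lt_of_le hzm (min_le_left _ _)⟩
        ⟨hz1, lt_of_lt_of_le hzm (min_le_right _ _)⟩
    -- case A ≤ w : SR F vanishes on (w,v)
    rcases le_or_gt A w with hAw | hwA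
    · have hzero : ∀ x ∈ Set.Ioo w v, SR a b q F x = 0 := by
        intro x hx
        refine Finset.sum_eq_zero fun j hj => ?_
        rw [if_neg]
        push_neg
        exact lt_of_le_of_lt (le_trans (hmax j hj) hAw) hx.1
      calc ∫⁻ x in Set.Ioo w v, ENNReal.ofReal (exp (γ * SR a b q F x))
          = ∫⁻ _x in Set.Ioo w v, 1 := by
            refine setLIntegral_congr_fun measurableSet_Ioo (fun x hx => ?_)
            rw [hzero x hx, mul_zero, Real.exp_zero, ENNReal.ofReal_one]
        _ = volume (Set.Ioo w v) := setLIntegral_one _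
        _ = ENNReal.ofReal (v - w) := Real.volume_Ioo
        _ ≤ ENNReal.ofReal (2 * (v - w)) := ENNReal.ofReal_le_ofReal (by linarith)
    -- main case w < A < v
    have hAv : A < v := lt_of_lt_of_le (hab j0) (hbv j0 hj0F)
    have hLv : L ≤ v - A := by
      have := hbv j0 hj0F; rw [hLdef]; linarith
    set F' := F.erase j0 with hF'
    have hF'ss : F' ⊂ F := Finset.erase_ssubset hj0F
    have hmeas' : Measurable fun x => ENNReal.ofReal (exp (γ * SR a b q F' x)) :=
      (ENNReal.measurable_ofReal.comp
        ((Real.measurable_exp).comp ((SR_measurable hab (by linarith) F').const_mul γ)))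
    -- split the integral
    have hsplit : Set.Ioo w v = Set.Ioo w A ∪ Set.Ico A v :=
      (Set.Ioo_union_Ico_eq_Ioo hwA hAv.le).symm
    have hdisjset : Disjoint (Set.Ioo w A) (Set.Ico A v) := by
      refine Set.disjoint_left.mpr fun x hx1 hx2 => ?_
      exact absurd hx2.1 (not_le.mpr hx1.2)
    rw [hsplit, lintegral_union measurableSet_Ico hdisjset]
    -- part 2 bound
    have hpart2 : ∫⁻ x in Set.Ico A v, ENNReal.ofReal (exp (γ * SR a b q F x))
        ≤ ENNReal.ofReal (v - A) := by
      rw [← Measure.restrict_congr_set (Ioo_ae_eq_Ico (a := A) (b := v))]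
      have hzero : ∀ x ∈ Set.Ioo A v, SR a b q F x = 0 := by
        intro x hx
        refine Finset.sum_eq_zero fun j hj => ?_
        rw [if_neg]
        push_neg
        exact lt_of_le_of_lt (hmax j hj) hx.1
      calc ∫⁻ x in Set.Ioo A v, ENNReal.ofReal (exp (γ * SR a b q F x))
          = ∫⁻ _x in Set.Ioo A v, 1 := by
            refine setLIntegral_congr_fun measurableSet_Ioo (fun x hx => ?_)
            rw [hzero x hx, mul_zero, Real.exp_zero, ENNReal.ofReal_one]
        _ = volume (Set.Ioo A v) := setLIntegral_one _
        _ ≤ ENNReal.ofReal (v - A) := le_of_eq Real.volume_Ioo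
    -- part 1
    have hrrq_nonneg : ∀ x : ℝ, 0 ≤ rr a b j0 x ^ q :=
      fun x => Real.rpow_nonneg (rr_pos (hab j0) x).le q
    have hrrq_le_one : ∀ x : ℝ, rr a b j0 x ^ q ≤ 1 :=
      fun x => Real.rpow_le_one (rr_pos (hab j0) x).le (rr_le_one (hab j0) x) (by linarith)
    have hSRsplit : ∀ x ∈ Set.Ioo w A, SR a b q F x = rr a b j0 x ^ q + SR a b q F' x := by
      intro x hx
      rw [SR, ← Finset.add_sum_erase F _ hj0F, if_pos hx.2.le, hF', SR]
    have key1 : ∀ x ∈ Set.Ioo w A,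
        ENNReal.ofReal (exp (γ * SR a b q F x)) ≤
          ENNReal.ofReal (exp (γ * SR a b q F' x)) +
          ENNReal.ofReal (2 * γ) *
            ENNReal.ofReal (rr a b j0 x ^ q * exp (γ * SR a b q F' x)) := by
      intro x hx
      rw [hSRsplit x hx, mul_add, Real.exp_add]
      have hz0 : 0 ≤ γ * (rr a b j0 x ^ q) := mul_nonneg hγ0.le (hrrq_nonneg x)
      have hz1 : γ * (rr a b j0 x ^ q) ≤ γ := by nlinarith [hrrq_le_one x]
      have hexp := exp_le_aux hz0 hz1 hγ60
      have hE : (0:ℝ) ≤ exp (γ * SR a b q F' x) := (Real.exp_pos _).le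
      calc ENNReal.ofReal (exp (γ * rr a b j0 x ^ q) * exp (γ * SR a b q F' x))
          ≤ ENNReal.ofReal ((1 + 2 * (γ * rr a b j0 x ^ q)) * exp (γ * SR a b q F' x)) :=
            ENNReal.ofReal_le_ofReal (mul_le_mul_of_nonneg_right hexp hE)
        _ = ENNReal.ofReal (exp (γ * SR a b q F' x) +
              2 * γ * (rr a b j0 x ^ q * exp (γ * SR a b q F' x))) := by ring_nf
        _ = ENNReal.ofReal (exp (γ * SR a b q F' x)) +
              ENNReal.ofReal (2 * γ * (rr a b j0 x ^ q * exp (γ * SR a b q F' x))) :=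
            ENNReal.ofReal_add hE (by nlinarith [hrrq_nonneg x, (Real.exp_pos (γ * SR a b q F' x)).le, mul_nonneg (hrrq_nonneg x) (Real.exp_pos (γ * SR a b q F' x)).le])
        _ = ENNReal.ofReal (exp (γ * SR a b q F' x)) +
              ENNReal.ofReal (2 * γ) *
                ENNReal.ofReal (rr a b j0 x ^ q * exp (γ * SR a b q F' x)) := by
            rw [ENNReal.ofReal_mul (by linarith : (0:ℝ) ≤ 2 * γ)]
    have hgmeas : Measurable fun x => ENNReal.ofReal (rr a b j0 x ^ q * exp (γ * SR a b q F' x)) := by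
      apply ENNReal.measurable_ofReal.comp
      exact (((rr_continuous (hab j0)).rpow_const (fun x => Or.inr (by linarith))).measurable).mul
        ((Real.measurable_exp).comp ((SR_measurable hab (by linarith) F').const_mul γ))
    set T := ∫⁻ x in Set.Ioo w A, ENNReal.ofReal (rr a b j0 x ^ q * exp (γ * SR a b q F' x)) with hT
    have hpart1 : ∫⁻ x in Set.Ioo w A, ENNReal.ofReal (exp (γ * SR a b q F x)) ≤
        ENNReal.ofReal (2 * (A - w)) + ENNReal.ofReal (2 * γ) * T := by
      calc ∫⁻ x in Set.Ioo w A, ENNReal.ofReal (exp (γ * SR a b q F x))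
          ≤ ∫⁻ x in Set.Ioo w A, (ENNReal.ofReal (exp (γ * SR a b q F' x)) +
              ENNReal.ofReal (2 * γ) *
                ENNReal.ofReal (rr a b j0 x ^ q * exp (γ * SR a b q F' x))) :=
            setLIntegral_mono' measurableSet_Ioo key1
        _ = (∫⁻ x in Set.Ioo w A, ENNReal.ofReal (exp (γ * SR a b q F' x))) +
              ∫⁻ x in Set.Ioo w A, ENNReal.ofReal (2 * γ) *
                ENNReal.ofReal (rr a b j0 x ^ q * exp (γ * SR a b q F' x)) :=
            lintegral_add_left hmeas' _
        _ = (∫⁻ x in Set.Ioo w A, ENNReal.ofReal (exp (γ * SR a b q F' x))) +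
              ENNReal.ofReal (2 * γ) * T :=
            by rw [lintegral_const_mul _ hgmeas]
        _ ≤ ENNReal.ofReal (2 * (A - w)) + ENNReal.ofReal (2 * γ) * T := by
            gcongr
            exact ih F' hF'ss w A hb_erase
    -- bound T
    have hcover : Set.Ioo w A ⊆ Set.Ioo (A - L) A ∪
        ⋃ k : ℕ, Set.Ioc (A - 2 ^ (k + 1) * L) (A - 2 ^ k * L) := by
      intro x hx
      rcases lt_or_ge (A - L) x with h1 | h1
      · exact Set.mem_union_left _ ⟨h1, hx.2⟩
      · refine Set.mem_union_right _ ?_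
        have hr1 : 1 ≤ (A - x) / L := by rw [le_div_iff₀ hL]; linarith
        have hex : ∃ n : ℕ, (A - x) / L < 2 ^ n :=
          pow_unbounded_of_one_lt ((A - x) / L) one_lt_two
        classical
        have hn0 : (A - x) / L < 2 ^ (Nat.find hex) := Nat.find_spec hex
        have hne0 : Nat.find hex ≠ 0 := by
          intro h0
          rw [h0, pow_zero] at hn0
          linarith
        obtain ⟨k, hk⟩ := Nat.exists_eq_succ_of_ne_zero hne0
        have hmin : ¬ ((A - x) / L < 2 ^ k) := Nat.find_min hex (by omega)
        push_neg at hmin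
        rw [hk] at hn0
        refine Set.mem_iUnion.mpr ⟨k, ?_, ?_⟩
        · have h2 : A - x < 2 ^ (k + 1) * L := by
            rw [div_lt_iff₀ hL] at hn0
            simpa [Nat.succ_eq_add_one] using hn0
          linarith
        · have h3 : 2 ^ k * L ≤ A - x := by
            rw [le_div_iff₀ hL] at hmin; linarith
          linarith
    have hpiece0 : ∫⁻ x in Set.Ioo (A - L) A,
        ENNReal.ofReal (rr a b j0 x ^ q * exp (γ * SR a b q F' x)) ≤
        ENNReal.ofReal (2 * L) := by
      calc ∫⁻ x in Set.Ioo (A - L) A,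
          ENNReal.ofReal (rr a b j0 x ^ q * exp (γ * SR a b q F' x))
          ≤ ∫⁻ x in Set.Ioo (A - L) A, ENNReal.ofReal (exp (γ * SR a b q F' x)) := by
            refine setLIntegral_mono' measurableSet_Ioo fun x _ => ?_
            refine ENNReal.ofReal_le_ofReal ?_
            nlinarith [hrrq_le_one x, hrrq_nonneg x, (Real.exp_pos (γ * SR a b q F' x)).le]
        _ ≤ ENNReal.ofReal (2 * (A - (A - L))) := ih F' hF'ss (A - L) A hb_erase
        _ = ENNReal.ofReal (2 * L) := by ring_nf
    have hpiecek : ∀ k : ℕ, ∫⁻ x in Set.Ioc (A - 2 ^ (k + 1) * L) (A - 2 ^ k * L),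
        ENNReal.ofReal (rr a b j0 x ^ q * exp (γ * SR a b q F' x)) ≤
        ENNReal.ofReal (8 * L * ((((2:ℝ)⁻¹) ^ (q - 1)) ^ k)) := by
      intro k
      have h2k : (0:ℝ) < 2 ^ k := by positivity
      have hrrb : ∀ x ∈ Set.Ioc (A - 2 ^ (k + 1) * L) (A - 2 ^ k * L),
          rr a b j0 x ^ q ≤ (((2:ℝ) ^ k)⁻¹) ^ q := by
        intro x hx
        have hd : (2:ℝ) ^ k * L ≤ a j0 - x := by
          have := hx.2; rw [← hA]; linarith
        have h1 : rr a b j0 x ≤ (b j0 - a j0) / (2 ^ k * L + (b j0 - a j0)) :=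
          rr_le (hab j0) (by positivity) hd
        have h2 : (b j0 - a j0) / (2 ^ k * L + (b j0 - a j0)) ≤ ((2:ℝ) ^ k)⁻¹ := by
          rw [← hLdef, div_le_iff₀ (by nlinarith)]
          rw [inv_mul_eq_div, le_div_iff₀ h2k]
          nlinarith
        exact Real.rpow_le_rpow (rr_pos (hab j0) x).le (h1.trans h2) (by linarith)
      calc ∫⁻ x in Set.Ioc (A - 2 ^ (k + 1) * L) (A - 2 ^ k * L),
          ENNReal.ofReal (rr a b j0 x ^ q * exp (γ * SR a b q F' x))
          ≤ ∫⁻ x in Set.Ioc (A - 2 ^ (k + 1) * L) (A - 2 ^ k * L),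
              ENNReal.ofReal ((((2:ℝ) ^ k)⁻¹) ^ q) *
                ENNReal.ofReal (exp (γ * SR a b q F' x)) := by
            refine setLIntegral_mono' measurableSet_Ioc fun x hx => ?_
            rw [← ENNReal.ofReal_mul (by positivity)]
            refine ENNReal.ofReal_le_ofReal ?_
            exact mul_le_mul_of_nonneg_right (hrrb x hx) (Real.exp_pos _).le
        _ = ENNReal.ofReal ((((2:ℝ) ^ k)⁻¹) ^ q) *
              ∫⁻ x in Set.Ioc (A - 2 ^ (k + 1) * L) (A - 2 ^ k * L),
                ENNReal.ofReal (exp (γ * SR a b q F' x)) :=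
            lintegral_const_mul _ hmeas'
        _ ≤ ENNReal.ofReal ((((2:ℝ) ^ k)⁻¹) ^ q) *
              ENNReal.ofReal (2 * (A - (A - 2 ^ (k + 2) * L))) := by
            refine mul_le_mul_right ?_ _
            refine le_trans (lintegral_mono_set ?_) (ih F' hF'ss (A - 2 ^ (k + 2) * L) A hb_erase)
            intro x hx
            simp only [Set.mem_Ioc] at hx
            simp only [Set.mem_Ioo]
            have hlt : (2:ℝ) ^ (k+1) * L < 2 ^ (k+2) * L := by
              have he : ((2:ℝ)) ^ (k+2) = 2 * 2 ^ (k+1) := by ring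
              nlinarith [pow_pos (show (0:ℝ) < 2 by norm_num) (k+1)]
            have hpk : (0:ℝ) < 2 ^ k * L := by positivity
            exact ⟨by linarith [hx.1], by linarith [hx.2]⟩
        _ = ENNReal.ofReal (8 * L * ((((2:ℝ)⁻¹) ^ (q - 1)) ^ k)) := by
            rw [← ENNReal.ofReal_mul (by positivity)]
            congr 1
            have : A - (A - 2 ^ (k + 2) * L) = 2 ^ (k + 2) * L := by ring
            rw [this]
            exact pow_calc hq k hL.le
    have hTbound : T ≤ ENNReal.ofReal (26 * (q / (q - 1)) * L) := by
      have hu0 : (0:ℝ) ≤ ((2:ℝ)⁻¹) ^ (q - 1) := Real.rpow_nonneg (by norm_num) _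
      have hu1 : ((2:ℝ)⁻¹) ^ (q - 1) < 1 :=
        Real.rpow_lt_one (by norm_num) (by norm_num) (by linarith)
      have hsummable : Summable (fun k : ℕ => 8 * L * ((((2:ℝ)⁻¹) ^ (q - 1)) ^ k)) :=
        (summable_geometric_of_lt_one hu0 hu1).mul_left _
      calc T ≤ ∫⁻ x in Set.Ioo (A - L) A ∪
              ⋃ k : ℕ, Set.Ioc (A - 2 ^ (k + 1) * L) (A - 2 ^ k * L),
              ENNReal.ofReal (rr a b j0 x ^ q * exp (γ * SR a b q F' x)) :=
            lintegral_mono_set hcover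
        _ ≤ (∫⁻ x in Set.Ioo (A - L) A,
              ENNReal.ofReal (rr a b j0 x ^ q * exp (γ * SR a b q F' x))) +
            ∫⁻ x in ⋃ k : ℕ, Set.Ioc (A - 2 ^ (k + 1) * L) (A - 2 ^ k * L),
              ENNReal.ofReal (rr a b j0 x ^ q * exp (γ * SR a b q F' x)) :=
            lintegral_union_le _ _ _
        _ ≤ ENNReal.ofReal (2 * L) +
            ∑' k : ℕ, ∫⁻ x in Set.Ioc (A - 2 ^ (k + 1) * L) (A - 2 ^ k * L),
              ENNReal.ofReal (rr a b j0 x ^ q * exp (γ * SR a b q F' x)) :=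
            add_le_add hpiece0 (lintegral_iUnion_le _ _)
        _ ≤ ENNReal.ofReal (2 * L) +
            ∑' k : ℕ, ENNReal.ofReal (8 * L * ((((2:ℝ)⁻¹) ^ (q - 1)) ^ k)) := by
            gcongr with k
            exact hpiecek k
        _ = ENNReal.ofReal (2 * L) +
            ENNReal.ofReal (∑' k : ℕ, 8 * L * ((((2:ℝ)⁻¹) ^ (q - 1)) ^ k)) := by
            rw [ENNReal.ofReal_tsum_of_nonneg
              (fun k => mul_nonneg (by nlinarith [hL.le] : (0:ℝ) ≤ 8 * L) (pow_nonneg hu0 k)) hsummable]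
        _ ≤ ENNReal.ofReal (2 * L) + ENNReal.ofReal (8 * L * (3 * (q / (q - 1)))) := by
            refine add_le_add le_rfl (ENNReal.ofReal_le_ofReal ?_)
            rw [tsum_mul_left]
            exact mul_le_mul_of_nonneg_left (geom_bound hq) (by nlinarith [hL.le])
        _ ≤ ENNReal.ofReal (26 * (q / (q - 1)) * L) := by
            rw [← ENNReal.ofReal_add (by nlinarith [hL.le] : (0:ℝ) ≤ 2 * L)
              (by nlinarith [hL.le, le_trans zero_le_one hq'] : (0:ℝ) ≤ 8 * L * (3 * (q / (q - 1))))]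
            refine ENNReal.ofReal_le_ofReal ?_
            nlinarith [mul_nonneg (sub_nonneg.2 hq') hL.le]
    -- combine everything
    have hgam : ENNReal.ofReal (2 * γ) * T ≤ ENNReal.ofReal (2 * γ * (26 * (q / (q - 1)) * L)) := by
      rw [ENNReal.ofReal_mul (by linarith : (0:ℝ) ≤ 2 * γ)]
      exact mul_le_mul_right hTbound _
    calc (∫⁻ x in Set.Ioo w A, ENNReal.ofReal (exp (γ * SR a b q F x))) +
          ∫⁻ x in Set.Ico A v, ENNReal.ofReal (exp (γ * SR a b q F x))
        ≤ (ENNReal.ofReal (2 * (A - w)) + ENNReal.ofReal (2 * γ * (26 * (q / (q - 1)) * L))) +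
            ENNReal.ofReal (v - A) := by
          refine add_le_add (hpart1.trans ?_) hpart2
          exact add_le_add le_rfl hgam
      _ = ENNReal.ofReal (2 * (A - w) + 2 * γ * (26 * (q / (q - 1)) * L) + (v - A)) := by
          rw [← ENNReal.ofReal_add (by linarith : (0:ℝ) ≤ 2 * (A - w))
              (by nlinarith [mul_nonneg (mul_nonneg hγ0.le (le_trans zero_le_one hq')) hL.le] :
                (0:ℝ) ≤ 2 * γ * (26 * (q / (q - 1)) * L)),
            ← ENNReal.ofReal_add
              (by nlinarith [mul_nonneg (mul_nonneg hγ0.le (le_trans zero_le_one hq')) hL.le] :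
                (0:ℝ) ≤ 2 * (A - w) + 2 * γ * (26 * (q / (q - 1)) * L))
              (by linarith : (0:ℝ) ≤ v - A)]
      _ ≤ ENNReal.ofReal (2 * (v - w)) := by
          refine ENNReal.ofReal_le_ofReal ?_
          nlinarith [mul_le_mul_of_nonneg_right hγq hL.le]

lemma exp_bound_up {x : ℝ} (h0 : 0 ≤ x) (h1 : x < 1) : Real.exp x ≤ 1 / (1 - x) := by
  have h2 : 1 - x ≤ Real.exp (-x) := by have := Real.add_one_le_exp (-x); linarith
  have h3 : Real.exp (-x) * Real.exp x = 1 := by rw [← Real.exp_add]; simp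
  have h4 := Real.exp_pos x
  rw [le_div_iff₀ (by linarith)]
  nlinarith

lemma log_log_three : (1:ℝ) / 25 ≤ Real.log (Real.log 3) := by
  have he1 := Real.exp_one_lt_d9
  have h109 : Real.exp (109/100 : ℝ) ≤ 3 := by
    have : Real.exp (109/100 : ℝ) = Real.exp 1 * Real.exp (9/100 : ℝ) := by
      rw [← Real.exp_add]; norm_num
    rw [this]
    have h9 : Real.exp (9/100 : ℝ) ≤ 1 / (1 - 9/100) := exp_bound_up (by norm_num) (by norm_num)
    nlinarith [Real.exp_pos (9/100 : ℝ), Real.exp_pos 1]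
  have hlog3 : (109/100 : ℝ) ≤ Real.log 3 := by
    rw [Real.le_log_iff_exp_le (by norm_num)]; exact h109
  have h125 : Real.exp (1/25 : ℝ) ≤ 109/100 := by
    have := exp_bound_up (show (0:ℝ) ≤ 1/25 by norm_num) (by norm_num)
    nlinarith
  calc (1:ℝ)/25 ≤ Real.log (109/100) := by
        rw [Real.le_log_iff_exp_le (by norm_num)]; exact h125
    _ ≤ Real.log (Real.log 3) := Real.log_le_log (by norm_num) hlog3

lemma exp_half_le : Real.exp (1/2 : ℝ) ≤ 5/3 := by
  have h : Real.exp (1/2 : ℝ) * Real.exp (1/2 : ℝ) = Real.exp 1 := by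
    rw [← Real.exp_add]; norm_num
  nlinarith [Real.exp_pos (1/2 : ℝ), Real.exp_one_lt_d9]

lemma exp_arg_le (k : ℕ) : Real.exp (((k:ℝ) + 1) / 2) ≤ 2 ^ k + 2 := by
  induction k with
  | zero => simpa using exp_half_le.trans (by norm_num)
  | succ n ih =>
    have hsplit : Real.exp (((n:ℝ) + 1 + 1) / 2) =
        Real.exp (((n:ℝ) + 1) / 2) * Real.exp (1/2 : ℝ) := by
      rw [← Real.exp_add]; ring_nf
    match n, ih with
    | 0, _ =>
      push_cast
      rw [show ((1:ℝ) + 1)/2 = 1 by norm_num]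
      nlinarith [Real.exp_one_lt_d9]
    | 1, _ =>
      push_cast
      have h32 : Real.exp ((3:ℝ)/2) = Real.exp 1 * Real.exp (1/2 : ℝ) := by
        rw [← Real.exp_add]; norm_num
      rw [show ((2:ℝ) + 1)/2 = 3/2 by norm_num, h32]
      nlinarith [Real.exp_one_lt_d9, exp_half_le, Real.exp_pos 1, Real.exp_pos (1/2:ℝ)]
    | (m+2), ih =>
      push_cast at hsplit ih ⊢
      rw [hsplit]
      have h4 : (4:ℝ) ≤ 2 ^ (m+2) := by
        have : ((2:ℝ))^(m+2) = 4 * 2^m := by ring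
        rw [this]
        have h1 : ((2:ℝ))^0 ≤ 2^m := pow_le_pow_right₀ (by norm_num) (Nat.zero_le m)
        simp at h1; nlinarith
      have hp : (0:ℝ) < 2 ^ (m+2) := by positivity
      have := exp_half_le
      have hpos := Real.exp_pos (((m:ℝ) + 2 + 1) / 2)
      have hle : Real.exp (((m:ℝ)+2+1)/2) * Real.exp (1/2:ℝ) ≤ (2^(m+2) + 2) * (5/3) := by
        apply mul_le_mul ih this (Real.exp_pos _).le (by positivity)
      refine hle.trans ?_
      have : ((2:ℝ))^(m+2+1) = 2 * 2^(m+2) := by ring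
      rw [this]; nlinarith

lemma log_pow_bound (k : ℕ) : ((k:ℝ) + 1) / 2 ≤ Real.log (2 ^ k + 2) := by
  rw [Real.le_log_iff_exp_le (by positivity)]
  exact exp_arg_le k

lemma sum_inv_sq_le (n : ℕ) : ∑ k ∈ Finset.range n, (1:ℝ) / ((k:ℝ) + 1) ^ 2 ≤ 2 - 2 / ((n:ℝ) + 1) := by
  induction n with
  | zero => norm_num
  | succ m ih =>
    rw [Finset.sum_range_succ]
    push_cast
    have hm : (0:ℝ) < (m:ℝ) + 1 := by positivity
    have hm2 : (0:ℝ) < (m:ℝ) + 2 := by positivity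
    have key : 1 / ((m:ℝ) + 1) ^ 2 ≤ 2 / ((m:ℝ)+1) - 2 / ((m:ℝ)+2) := by
      rw [div_sub_div _ _ hm.ne' hm2.ne']
      rw [div_le_div_iff₀ (by positivity) (by positivity)]
      nlinarith
    have hre : ((m:ℝ) + 1 + 1) = (m:ℝ) + 2 := by ring
    rw [hre]
    linarith [ih, key]

lemma inv_sq_summable : Summable (fun k : ℕ => (1:ℝ) / ((k:ℝ) + 1) ^ 2) := by
  have h := Real.summable_one_div_nat_pow.mpr (show 1 < 2 by norm_num)
  have := h.comp_injective (add_left_injective 1)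
  refine this.congr ?_
  intro k
  simp only [Function.comp]
  push_cast
  ring_nf

lemma inv_sq_tsum_bound : ∑' k : ℕ, ENNReal.ofReal ((4:ℝ) / ((k:ℝ) + 1) ^ 2) ≤ 8 := by
  have hs : Summable (fun k : ℕ => (4:ℝ) / ((k:ℝ) + 1) ^ 2) := by
    simpa [div_eq_mul_inv, mul_assoc] using inv_sq_summable.mul_left 4
  rw [← ENNReal.ofReal_tsum_of_nonneg (fun k => by positivity) hs]
  have ht : ∑' k : ℕ, (4:ℝ) / ((k:ℝ) + 1) ^ 2 ≤ 8 := by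
    apply Summable.tsum_le_of_sum_le hs
    intro s
    obtain ⟨n, hn⟩ := s.exists_nat_subset_range
    calc ∑ k ∈ s, (4:ℝ) / ((k:ℝ) + 1) ^ 2 ≤ ∑ k ∈ Finset.range n, (4:ℝ) / ((k:ℝ) + 1) ^ 2 :=
          Finset.sum_le_sum_of_subset_of_nonneg hn (fun k _ _ => by positivity)
      _ = 4 * ∑ k ∈ Finset.range n, (1:ℝ) / ((k:ℝ) + 1) ^ 2 := by
          rw [Finset.mul_sum]; congr 1; ext k; ring
      _ ≤ 4 * (2 - 2 / ((n:ℝ)+1)) := by nlinarith [sum_inv_sq_le n]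
      _ ≤ 8 := by
          have : (0:ℝ) < (n:ℝ) + 1 := by positivity
          nlinarith [div_pos (show (0:ℝ) < 2 by norm_num) this]
  calc ENNReal.ofReal (∑' k : ℕ, (4:ℝ) / ((k:ℝ) + 1) ^ 2) ≤ ENNReal.ofReal 8 :=
        ENNReal.ofReal_le_ofReal ht
    _ = 8 := by norm_num


noncomputable def SL (a b : ℕ → ℝ) (q : ℝ) (F : Finset ℕ) (x : ℝ) : ℝ :=
  ∑ j ∈ F, if b j ≤ x then rr a b j x ^ q else 0

lemma rr_neg (a b : ℕ → ℝ) (j : ℕ) (x : ℝ) :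
    rr (fun i => -(b i)) (fun i => -(a i)) j (-x) = rr a b j x := by
  unfold rr
  have h1 : (-(a j)) - (-(b j)) = b j - a j := by ring
  have h2 : |(-x) - ((-(b j)) + (-(a j))) / 2| = |x - (a j + b j) / 2| := by
    rw [show (-x) - ((-(b j)) + (-(a j))) / 2 = -(x - (a j + b j) / 2) by ring, abs_neg]
  rw [h1, h2]

lemma SL_eq (a b : ℕ → ℝ) (q : ℝ) (F : Finset ℕ) (x : ℝ) :
    SL a b q F x = SR (fun i => -(b i)) (fun i => -(a i)) q F (-x) := by
  unfold SL SR
  refine Finset.sum_congr rfl fun j _ => ?_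
  rw [rr_neg]
  refine if_congr ?_ rfl rfl
  show b j ≤ x ↔ -x ≤ -(b j)
  constructor <;> intro h <;> linarith

lemma chebyR (hab : ∀ j, a j < b j)
    (hdisj : Pairwise fun i j => Disjoint (Set.Ioo (a i) (b i)) (Set.Ioo (a j) (b j)))
    (hb : ∀ j, b j ≤ π) {q γ : ℝ} (hq : 1 < q) (hγ0 : 0 < γ)
    (hγq : γ * (q / (q - 1)) ≤ 1 / 60) (n : ℕ) {M : ℝ} (hM : 0 < M) :
    volume {x ∈ Set.Ioo (-π) π | M < SR a b q (Finset.range n) x} ≤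
      ENNReal.ofReal (4 * π * exp (-(γ * M))) := by
  set G := {x ∈ Set.Ioo (-π) π | M < SR a b q (Finset.range n) x} with hG
  have hGsub : G ⊆ Set.Ioo (-π) π := fun x hx => hx.1
  have hGm : MeasurableSet G :=
    measurableSet_Ioo.inter
      (measurableSet_lt measurable_const (SR_measurable hab (by linarith) _))
  have hkey : ENNReal.ofReal (exp (γ * M)) * volume G ≤ ENNReal.ofReal (4 * π) := by
    calc ENNReal.ofReal (exp (γ * M)) * volume G
        = ∫⁻ _x in G, ENNReal.ofReal (exp (γ * M)) := (setLIntegral_const _ _).symm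
      _ ≤ ∫⁻ x in G, ENNReal.ofReal (exp (γ * SR a b q (Finset.range n) x)) := by
          refine setLIntegral_mono' hGm fun x hx => ?_
          exact ENNReal.ofReal_le_ofReal
            (Real.exp_le_exp.2 (mul_le_mul_of_nonneg_left hx.2.le hγ0.le))
      _ ≤ ∫⁻ x in Set.Ioo (-π) π,
            ENNReal.ofReal (exp (γ * SR a b q (Finset.range n) x)) :=
          lintegral_mono_set hGsub
      _ ≤ ENNReal.ofReal (2 * (π - (-π))) :=
          lemW hab hdisj hq hγ0 hγq (Finset.range n) (-π) π (fun j _ => hb j)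
      _ ≤ ENNReal.ofReal (4 * π) := ENNReal.ofReal_le_ofReal (le_of_eq (by ring))
  have h1 : ENNReal.ofReal (exp (γ * M)) ≠ 0 := by
    simp [ENNReal.ofReal_eq_zero, not_le, Real.exp_pos]
  have h2 : ENNReal.ofReal (exp (γ * M)) ≠ ⊤ := ENNReal.ofReal_ne_top
  rw [← ENNReal.mul_le_mul_iff_right h1 h2]
  refine hkey.trans (le_of_eq ?_)
  rw [← ENNReal.ofReal_mul (Real.exp_nonneg _)]
  congr 1
  rw [Real.exp_neg]
  have := Real.exp_pos (γ * M)
  field_simp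

lemma chebyL (hab : ∀ j, a j < b j)
    (hdisj : Pairwise fun i j => Disjoint (Set.Ioo (a i) (b i)) (Set.Ioo (a j) (b j)))
    (ha : ∀ j, -π ≤ a j) {q γ : ℝ} (hq : 1 < q) (hγ0 : 0 < γ)
    (hγq : γ * (q / (q - 1)) ≤ 1 / 60) (n : ℕ) {M : ℝ} (hM : 0 < M) :
    volume {x ∈ Set.Ioo (-π) π | M < SL a b q (Finset.range n) x} ≤
      ENNReal.ofReal (4 * π * exp (-(γ * M))) := by
  have hab' : ∀ j, (fun i => -(b i)) j < (fun i => -(a i)) j := fun j => by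
    simp only; linarith [hab j]
  have hdisj' : Pairwise fun i j =>
      Disjoint (Set.Ioo ((fun i => -(b i)) i) ((fun i => -(a i)) i))
        (Set.Ioo ((fun i => -(b i)) j) ((fun i => -(a i)) j)) := by
    intro i j hij
    refine Set.disjoint_left.mpr fun x hxi hxj => ?_
    have h1 : -x ∈ Set.Ioo (a i) (b i) := by
      simp only [Set.mem_Ioo] at hxi ⊢
      constructor <;> linarith [hxi.1, hxi.2]
    have h2 : -x ∈ Set.Ioo (a j) (b j) := by
      simp only [Set.mem_Ioo] at hxj ⊢
      constructor <;> linarith [hxj.1, hxj.2]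
    exact Set.disjoint_left.mp (hdisj hij) h1 h2
  have hb' : ∀ j, (fun i => -(a i)) j ≤ π := fun j => by
    simp only; linarith [ha j]
  have hset : {x ∈ Set.Ioo (-π) π | M < SL a b q (Finset.range n) x}
      = Neg.neg ⁻¹' {y ∈ Set.Ioo (-π) π |
          M < SR (fun i => -(b i)) (fun i => -(a i)) q (Finset.range n) y} := by
    ext x
    simp only [Set.mem_preimage, Set.mem_sep_iff, Set.mem_Ioo, Set.mem_setOf_eq]
    rw [SL_eq]
    constructor
    · rintro ⟨⟨hx1, hx2⟩, hx3⟩; exact ⟨⟨by linarith, by linarith⟩, hx3⟩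
    · rintro ⟨⟨hx1, hx2⟩, hx3⟩; exact ⟨⟨by linarith, by linarith⟩, hx3⟩
  rw [hset, Measure.measure_preimage_neg]
  exact chebyR hab' hdisj' hb' hq hγ0 hγq n hM

lemma sum_le_decomp (hab : ∀ j, a j < b j)
    (hdisj : Pairwise fun i j => Disjoint (Set.Ioo (a i) (b i)) (Set.Ioo (a j) (b j)))
    {q : ℝ} (hq : 0 ≤ q) (n : ℕ) (x : ℝ) :
    ∑ j ∈ Finset.range n, rr a b j x ^ q ≤
      1 + SL a b q (Finset.range n) x + SR a b q (Finset.range n) x := by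
  classical
  have hterm : ∀ j ∈ Finset.range n, rr a b j x ^ q ≤
      (if a j < x ∧ x < b j then (1:ℝ) else 0) +
      ((if b j ≤ x then rr a b j x ^ q else 0) + (if x ≤ a j then rr a b j x ^ q else 0)) := by
    intro j _
    have hrq0 : 0 ≤ rr a b j x ^ q := Real.rpow_nonneg (rr_pos (hab j) x).le q
    rcases le_or_gt x (a j) with h1 | h1
    · rw [if_neg (by rintro ⟨h, _⟩; linarith), if_neg (by linarith [hab j]), if_pos h1]
      linarith
    rcases le_or_gt (b j) x with h2 | h2
    · rw [if_neg (by rintro ⟨_, h⟩; linarith), if_pos h2, if_neg (by linarith)]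
      linarith
    · rw [if_pos ⟨h1, h2⟩, if_neg (by linarith), if_neg (by linarith)]
      have := Real.rpow_le_one (rr_pos (hab j) x).le (rr_le_one (hab j) x) hq
      linarith
  have hcard : ((Finset.range n).filter (fun j => a j < x ∧ x < b j)).card ≤ 1 := by
    rw [Finset.card_le_one]
    intro i hi j hj
    simp only [Finset.mem_filter] at hi hj
    by_contra hne
    exact Set.disjoint_left.mp (hdisj hne) ⟨hi.2.1, hi.2.2⟩ ⟨hj.2.1, hj.2.2⟩
  have hmid : (∑ j ∈ Finset.range n, if a j < x ∧ x < b j then (1:ℝ) else 0) ≤ 1 := by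
    rw [Finset.sum_boole]
    exact_mod_cast hcard
  calc ∑ j ∈ Finset.range n, rr a b j x ^ q
      ≤ ∑ j ∈ Finset.range n, ((if a j < x ∧ x < b j then (1:ℝ) else 0) +
          ((if b j ≤ x then rr a b j x ^ q else 0) + (if x ≤ a j then rr a b j x ^ q else 0))) :=
        Finset.sum_le_sum hterm
    _ = (∑ j ∈ Finset.range n, if a j < x ∧ x < b j then (1:ℝ) else 0) +
        (SL a b q (Finset.range n) x + SR a b q (Finset.range n) x) := by
        rw [Finset.sum_add_distrib, Finset.sum_add_distrib]
        rfl
    _ ≤ 1 + (SL a b q (Finset.range n) x + SR a b q (Finset.range n) x) := by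
        exact add_le_add_left hmid _
    _ = 1 + SL a b q (Finset.range n) x + SR a b q (Finset.range n) x := by ring

lemma sum_meas (hab : ∀ j, a j < b j) {q : ℝ} (hq : 0 ≤ q) (n : ℕ) :
    Measurable fun x => ∑ j ∈ Finset.range n, rr a b j x ^ q := by
  refine Finset.measurable_sum _ fun j _ => ?_
  exact ((rr_continuous (hab j)).rpow_const (fun x => Or.inr hq)).measurable

theorem stmt14' (a b : ℕ → ℝ) (hab : ∀ j, a j < b j)
    (hsub : ∀ j, Set.Ioo (a j) (b j) ⊆ Set.Ico (-π) π)
    (hdisj : Pairwise fun i j => Disjoint (Set.Ioo (a i) (b i)) (Set.Ioo (a j) (b j))) :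
    ∃ C : ℝ, 0 < C ∧ ∃ c : ℝ, 0 < c ∧ ∀ lam : ℝ, 0 < lam →
      volume {x ∈ Set.Ico (-π) π |
          lam < ⨆ p : {p : ℝ // 1 < p},
            (∑' j : ℕ, ((b j - a j) / (|x - (a j + b j) / 2| + (b j - a j))) ^ (p.1 / (p.1 - 1))) /
              (p.1 * Real.log (Real.log (p.1 + 2)))} ≤
        ENNReal.ofReal (C * Real.exp (-c * lam)) := by
  classical
  have hpi := Real.pi_pos
  have hend : ∀ j, -π ≤ a j ∧ b j ≤ π := by
    intro j
    constructor
    · by_contra h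
      push_neg at h
      have hmin : a j < min (b j) (-π) := lt_min (hab j) h
      set z := (a j + min (b j) (-π)) / 2 with hz
      have hz1 : a j < z := by rw [hz]; linarith
      have hz2 : z < min (b j) (-π) := by rw [hz]; linarith
      have hmem := hsub j ⟨hz1, lt_of_lt_of_le hz2 (min_le_left _ _)⟩
      have h1 : -π ≤ z := hmem.1
      have h2 : z < -π := lt_of_lt_of_le hz2 (min_le_right _ _)
      linarith
    · by_contra h
      push_neg at h
      have hmax : max (a j) π < b j := max_lt (hab j) h
      set z := (max (a j) π + b j) / 2 with hz
      have hz1 : max (a j) π < z := by rw [hz]; linarith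
      have hz2 : z < b j := by rw [hz]; linarith
      have hmem := hsub j ⟨lt_of_le_of_lt (le_max_left _ _) hz1, hz2⟩
      have h1 : z < π := hmem.2
      have h2 : π < z := lt_of_le_of_lt (le_max_right _ _) hz1
      linarith
  refine ⟨300, by norm_num, 1/18000, by norm_num, ?_⟩
  intro lam hlam
  set ll : ℕ → ℝ := fun k => Real.log (Real.log (2 ^ k + 2)) with hll
  have hone_le_pow : ∀ k : ℕ, (1:ℝ) ≤ 2 ^ k := fun k => by
    simpa using pow_le_pow_right₀ (by norm_num : (1:ℝ) ≤ 2) (Nat.zero_le k)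
  have hll25 : ∀ k, 1/25 ≤ ll k := by
    intro k
    refine le_trans log_log_three ?_
    have h3 : (3:ℝ) ≤ 2 ^ k + 2 := by linarith [hone_le_pow k]
    exact Real.log_le_log (Real.log_pos (by norm_num)) (Real.log_le_log (by norm_num) h3)
  set qk : ℕ → ℝ := fun k => (2:ℝ) ^ (k+1) / ((2:ℝ) ^ (k+1) - 1) with hqk
  have h2k1 : ∀ k : ℕ, (2:ℝ) ≤ 2 ^ (k+1) := fun k => by
    calc (2:ℝ) = 2 ^ 1 := by norm_num
      _ ≤ 2 ^ (k+1) := pow_le_pow_right₀ (by norm_num) (by omega)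
  have hqk1 : ∀ k, 1 < qk k := fun k => by
    have := h2k1 k
    rw [hqk]
    simp only
    rw [lt_div_iff₀ (by linarith)]
    linarith
  have hqk0 : ∀ k, (0:ℝ) ≤ qk k := fun k => le_of_lt (lt_trans zero_lt_one (hqk1 k))
  set B : ℕ → ℕ → Set ℝ := fun k n =>
    {x ∈ Set.Ico (-π) π |
      lam * 2 ^ k * ll k < ∑ j ∈ Finset.range n, rr a b j x ^ qk k} with hB
  have hincl : {x ∈ Set.Ico (-π) π |
      lam < ⨆ p : {p : ℝ // 1 < p},
        (∑' j : ℕ, ((b j - a j) / (|x - (a j + b j) / 2| + (b j - a j))) ^ (p.1 / (p.1 - 1))) /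
          (p.1 * Real.log (Real.log (p.1 + 2)))} ⊆ ⋃ (k : ℕ) (n : ℕ), B k n := by
    intro x hx
    obtain ⟨hx1, hx2⟩ := hx
    haveI : Nonempty {p : ℝ // 1 < p} := ⟨⟨2, one_lt_two⟩⟩
    have hp : ∃ p : {p : ℝ // 1 < p},
        lam < (∑' j : ℕ,
            ((b j - a j) / (|x - (a j + b j) / 2| + (b j - a j))) ^ (p.1 / (p.1 - 1))) /
          (p.1 * Real.log (Real.log (p.1 + 2))) := by
      by_contra h
      push_neg at h
      exact absurd hx2 (not_lt.mpr (ciSup_le h))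
    obtain ⟨⟨p, hp1⟩, hplt⟩ := hp
    simp only at hplt
    have hlogp : 1 < Real.log (p + 2) := by
      rw [Real.lt_log_iff_exp_lt (by linarith)]
      nlinarith [Real.exp_one_lt_d9]
    have hD : 0 < p * Real.log (Real.log (p + 2)) :=
      mul_pos (by linarith) (Real.log_pos hlogp)
    rw [lt_div_iff₀ hD] at hplt
    have hex : ∃ m : ℕ, p < 2 ^ m := pow_unbounded_of_one_lt p one_lt_two
    have hne0 : Nat.find hex ≠ 0 := by
      intro h0
      have := Nat.find_spec hex
      rw [h0, pow_zero] at this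
      linarith
    obtain ⟨k, hk⟩ := Nat.exists_eq_succ_of_ne_zero hne0
    have hkhi : p < 2 ^ (k+1) := by
      have := Nat.find_spec hex
      rw [hk] at this
      simpa [Nat.succ_eq_add_one] using this
    have hklow : (2:ℝ) ^ k ≤ p := by
      have h := Nat.find_min hex (show k < Nat.find hex by omega)
      push_neg at h
      exact h
    have hll0 : (0:ℝ) ≤ ll k := le_trans (by norm_num) (hll25 k)
    have hMkpos : 0 < lam * 2 ^ k * ll k := by
      nlinarith [mul_le_mul_of_nonneg_left (hll25 k)
          (show (0:ℝ) ≤ lam * 2 ^ k by positivity),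
        le_mul_of_one_le_right hlam.le (hone_le_pow k)]
    have hMk_le : lam * 2 ^ k * ll k ≤ lam * (p * Real.log (Real.log (p + 2))) := by
      have h1 : ll k ≤ Real.log (Real.log (p + 2)) := by
        rw [hll]
        simp only
        refine Real.log_le_log (Real.log_pos ?_) (Real.log_le_log (by positivity) (by linarith))
        linarith [hone_le_pow k]
      nlinarith [mul_le_mul hklow h1 hll0 (by linarith : (0:ℝ) ≤ p),
        mul_le_mul_of_nonneg_left
          (mul_le_mul hklow h1 hll0 (by linarith : (0:ℝ) ≤ p)) hlam.le]
    have htsum_gt : lam * 2 ^ k * ll k <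
        ∑' j : ℕ, ((b j - a j) / (|x - (a j + b j) / 2| + (b j - a j))) ^ (p / (p - 1)) :=
      lt_of_le_of_lt hMk_le hplt
    have hF : ∃ s : Finset ℕ, lam * 2 ^ k * ll k <
        ∑ j ∈ s, ((b j - a j) / (|x - (a j + b j) / 2| + (b j - a j))) ^ (p / (p - 1)) := by
      by_contra hFc
      push_neg at hFc
      exact absurd htsum_gt (not_lt.mpr (tsum_le_of_sum_le' hMkpos.le hFc))
    obtain ⟨s, hs⟩ := hF
    obtain ⟨n, hn⟩ := s.exists_nat_subset_range
    refine Set.mem_iUnion.mpr ⟨k, Set.mem_iUnion.mpr ⟨n, ?_⟩⟩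
    refine ⟨hx1, ?_⟩
    have hqkle : qk k ≤ p / (p - 1) := by
      rw [hqk]
      simp only
      rw [div_le_div_iff₀ (by linarith [h2k1 k]) (by linarith)]
      nlinarith
    have hstep1 : ∑ j ∈ s,
        ((b j - a j) / (|x - (a j + b j) / 2| + (b j - a j))) ^ (p / (p - 1))
        ≤ ∑ j ∈ s, rr a b j x ^ qk k := by
      refine Finset.sum_le_sum fun j _ => ?_
      exact Real.rpow_le_rpow_of_exponent_ge (rr_pos (hab j) x) (rr_le_one (hab j) x) hqkle
    have hstep2 : ∑ j ∈ s, rr a b j x ^ qk k ≤ ∑ j ∈ Finset.range n, rr a b j x ^ qk k :=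
      Finset.sum_le_sum_of_subset_of_nonneg hn
        (fun j _ _ => Real.rpow_nonneg (rr_pos (hab j) x).le _)
    calc lam * 2 ^ k * ll k < _ := hs
      _ ≤ _ := hstep1
      _ ≤ _ := hstep2
  have hBmono : ∀ k, Monotone fun n => B k n := by
    intro k m n hmn x hx
    refine ⟨hx.1, lt_of_lt_of_le hx.2 ?_⟩
    exact Finset.sum_le_sum_of_subset_of_nonneg (Finset.range_subset_range.mpr hmn)
      (fun j _ _ => Real.rpow_nonneg (rr_pos (hab j) x).le _)
  rcases le_or_gt 1440 lam with hbig | hsmall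
  · have hBbound : ∀ k n, volume (B k n) ≤
        ENNReal.ofReal (8 * π * exp (-(lam * ll k / 360))) := by
      intro k n
      set γk : ℝ := 1 / (60 * 2 ^ (k+1)) with hγk
      have hpow0 : (0:ℝ) < 2 ^ (k+1) := by positivity
      have hγk0 : 0 < γk := by rw [hγk]; positivity
      have hqq : qk k / (qk k - 1) = 2 ^ (k+1) := by
        rw [hqk]
        simp only
        have h1 : (0:ℝ) < 2 ^ (k+1) - 1 := by linarith [h2k1 k]
        field_simp
        ring
      have hγkq : γk * (qk k / (qk k - 1)) ≤ 1 / 60 := by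
        rw [hqq, hγk]
        rw [div_mul_eq_mul_div, one_mul, div_le_div_iff₀ (by positivity) (by norm_num)]
        linarith
      set M := lam * 2 ^ k * ll k with hM
      have hM3 : 3 ≤ M := by
        rw [hM]
        nlinarith [mul_le_mul_of_nonneg_left (hll25 k)
            (show (0:ℝ) ≤ lam * 2 ^ k by positivity),
          le_mul_of_one_le_right (by linarith : (0:ℝ) ≤ lam) (hone_le_pow k)]
      have hM30 : 0 < M / 3 := by linarith
      have hsubB : B k n ⊆
          {x ∈ Set.Ioo (-π) π | M/3 < SR a b (qk k) (Finset.range n) x} ∪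
          ({x ∈ Set.Ioo (-π) π | M/3 < SL a b (qk k) (Finset.range n) x} ∪ {-π}) := by
        intro x hx
        obtain ⟨hx1, hx2⟩ := hx
        rw [← hM] at hx2
        rcases eq_or_lt_of_le hx1.1 with heq | hlt
        · right; right
          simp [← heq]
        have hxIoo : x ∈ Set.Ioo (-π) π := ⟨hlt, hx1.2⟩
        have hdec := sum_le_decomp hab hdisj (hqk0 k) n x
        rcases lt_or_ge (M/3) (SR a b (qk k) (Finset.range n) x) with h | h
        · exact Or.inl ⟨hxIoo, h⟩
        · refine Or.inr (Or.inl ⟨hxIoo, ?_⟩)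
          by_contra hSL
          push_neg at hSL
          linarith
      have hcR := chebyR hab hdisj (fun j => (hend j).2) (hqk1 k) hγk0 hγkq n hM30
      have hcL := chebyL hab hdisj (fun j => (hend j).1) (hqk1 k) hγk0 hγkq n hM30
      have hγM : γk * (M/3) = lam * ll k / 360 := by
        rw [hγk, hM]
        have h2 : (2:ℝ) ^ (k+1) = 2 * 2 ^ k := by ring
        rw [h2]
        have h2k : (0:ℝ) < 2 ^ k := by positivity
        field_simp
        ring
      calc volume (B k n)
          ≤ volume ({x ∈ Set.Ioo (-π) π | M/3 < SR a b (qk k) (Finset.range n) x} ∪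
            ({x ∈ Set.Ioo (-π) π | M/3 < SL a b (qk k) (Finset.range n) x} ∪ {-π})) :=
            measure_mono hsubB
        _ ≤ volume {x ∈ Set.Ioo (-π) π | M/3 < SR a b (qk k) (Finset.range n) x} +
            volume ({x ∈ Set.Ioo (-π) π | M/3 < SL a b (qk k) (Finset.range n) x} ∪ {-π}) :=
            measure_union_le _ _
        _ ≤ volume {x ∈ Set.Ioo (-π) π | M/3 < SR a b (qk k) (Finset.range n) x} +
            (volume {x ∈ Set.Ioo (-π) π | M/3 < SL a b (qk k) (Finset.range n) x} +
              volume ({-π} : Set ℝ)) :=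
            add_le_add le_rfl (measure_union_le _ _)
        _ ≤ ENNReal.ofReal (4 * π * exp (-(γk * (M/3)))) +
            (ENNReal.ofReal (4 * π * exp (-(γk * (M/3)))) + 0) := by
            rw [measure_singleton]
            exact add_le_add hcR (add_le_add hcL le_rfl)
        _ = ENNReal.ofReal (8 * π * exp (-(lam * ll k / 360))) := by
            rw [hγM, add_zero, ← ENNReal.ofReal_add (by positivity) (by positivity)]
            congr 1
            ring
    calc volume {x ∈ Set.Ico (-π) π |
          lam < ⨆ p : {p : ℝ // 1 < p},
            (∑' j : ℕ,
              ((b j - a j) / (|x - (a j + b j) / 2| + (b j - a j))) ^ (p.1 / (p.1 - 1))) /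
              (p.1 * Real.log (Real.log (p.1 + 2)))}
        ≤ volume (⋃ (k : ℕ) (n : ℕ), B k n) := measure_mono hincl
      _ ≤ ∑' k : ℕ, volume (⋃ n : ℕ, B k n) := measure_iUnion_le _
      _ ≤ ∑' k : ℕ, ENNReal.ofReal (8 * π * exp (-(lam * ll k / 360))) := by
          refine ENNReal.tsum_le_tsum fun k => ?_
          rw [(hBmono k).measure_iUnion]
          exact iSup_le fun n => hBbound k n
      _ ≤ ∑' k : ℕ, ENNReal.ofReal (8 * π * exp (-(lam/18000))) *
            ENNReal.ofReal (4 / ((k:ℝ)+1)^2) := by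
          refine ENNReal.tsum_le_tsum fun k => ?_
          rw [← ENNReal.ofReal_mul (by positivity)]
          refine ENNReal.ofReal_le_ofReal ?_
          have hu := log_pow_bound k
          have hupos : 0 < Real.log (2 ^ k + 2) := by
            have : (0:ℝ) < ((k:ℝ)+1)/2 := by positivity
            linarith
          have hll0 : (0:ℝ) ≤ ll k := le_trans (by norm_num) (hll25 k)
          have hexp2 : exp (-(2 * ll k)) ≤ 4 / ((k:ℝ)+1)^2 := by
            have hexpll : exp (ll k) = Real.log (2 ^ k + 2) := by
              rw [hll]; exact Real.exp_log hupos
            have he : exp (-(2 * ll k)) * (exp (ll k) * exp (ll k)) = 1 := by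
              rw [← Real.exp_add, ← Real.exp_add,
                show -(2 * ll k) + (ll k + ll k) = 0 by ring, Real.exp_zero]
            rw [hexpll] at he
            rw [le_div_iff₀ (by positivity)]
            have hu2 : ((k:ℝ)+1) * ((k:ℝ)+1) ≤
                (2 * Real.log (2 ^ k + 2)) * (2 * Real.log (2 ^ k + 2)) :=
              mul_self_le_mul_self (by positivity) (by linarith)
            nlinarith [mul_le_mul_of_nonneg_left hu2 (Real.exp_pos (-(2 * ll k))).le, he]
          have hsplit2 : exp (-(lam * ll k / 360)) =
              exp (-(lam * ll k / 720)) * exp (-(lam * ll k / 720)) := by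
            rw [← Real.exp_add]
            congr 1
            ring
          have hh1 : exp (-(lam * ll k / 720)) ≤ exp (-(lam/18000)) := by
            apply Real.exp_le_exp.2
            have := hll25 k
            nlinarith
          have hh2 : exp (-(lam * ll k / 720)) ≤ exp (-(2 * ll k)) := by
            apply Real.exp_le_exp.2
            nlinarith
          have hfinal : exp (-(lam * ll k / 720)) * exp (-(lam * ll k / 720)) ≤
              exp (-(lam/18000)) * (4 / ((k:ℝ)+1)^2) := by
            have h4 : (0:ℝ) ≤ 4 / ((k:ℝ)+1)^2 := by positivity
            exact mul_le_mul hh1 (le_trans hh2 hexp2) (Real.exp_pos _).le (Real.exp_pos _).le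
          calc 8 * π * exp (-(lam * ll k / 360))
              = 8 * π * (exp (-(lam * ll k / 720)) * exp (-(lam * ll k / 720))) := by
                rw [hsplit2]
            _ ≤ 8 * π * (exp (-(lam/18000)) * (4 / ((k:ℝ)+1)^2)) := by
                refine mul_le_mul_of_nonneg_left hfinal (by positivity)
            _ = 8 * π * exp (-(lam/18000)) * (4 / ((k:ℝ)+1)^2) := by ring
      _ = ENNReal.ofReal (8 * π * exp (-(lam/18000))) *
            ∑' k : ℕ, ENNReal.ofReal (4 / ((k:ℝ)+1)^2) := ENNReal.tsum_mul_left
      _ ≤ ENNReal.ofReal (8 * π * exp (-(lam/18000))) * 8 :=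
            mul_le_mul_right inv_sq_tsum_bound _
      _ ≤ ENNReal.ofReal (300 * exp (-(1/18000) * lam)) := by
          have h8 : (8:ENNReal) = ENNReal.ofReal (8:ℝ) := by
            rw [ENNReal.ofReal_ofNat]
          rw [h8, ← ENNReal.ofReal_mul (by positivity)]
          refine ENNReal.ofReal_le_ofReal ?_
          have hee : -(lam/18000) = -(1/18000) * lam := by ring
          rw [hee]
          nlinarith [Real.exp_pos (-(1/18000) * lam), Real.pi_le_four]
  · calc volume {x ∈ Set.Ico (-π) π |
          lam < ⨆ p : {p : ℝ // 1 < p},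
            (∑' j : ℕ,
              ((b j - a j) / (|x - (a j + b j) / 2| + (b j - a j))) ^ (p.1 / (p.1 - 1))) /
              (p.1 * Real.log (Real.log (p.1 + 2)))}
        ≤ volume (Set.Ico (-π) π) := measure_mono (Set.sep_subset _ _)
      _ = ENNReal.ofReal (π - (-π)) := Real.volume_Ico
      _ ≤ ENNReal.ofReal (300 * exp (-(1/18000) * lam)) := by
          refine ENNReal.ofReal_le_ofReal ?_
          have h1 : 1 + (-(1/18000) * lam) ≤ exp (-(1/18000) * lam) := by
            have := Real.add_one_le_exp (-(1/18000) * lam)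
            linarith
          nlinarith [Real.pi_le_four]

/-- Oskolkov's exponential distributional estimate: for pairwise disjoint open intervals
Δ_j = (a_j, b_j) ⊂ 𝕋 with centers c_j,
|{x : sup_{p>1} (∑_j (|Δ_j|/(|x−c_j|+|Δ_j|))^q)/(p ln ln(p+2)) > λ}| ≤ C e^{−cλ}. -/
theorem stmt14 (a b : ℕ → ℝ) (hab : ∀ j, a j < b j)
    (hsub : ∀ j, Set.Ioo (a j) (b j) ⊆ Set.Ico (-π) π)
    (hdisj : Pairwise fun i j => Disjoint (Set.Ioo (a i) (b i)) (Set.Ioo (a j) (b j))) :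
    ∃ C : ℝ, 0 < C ∧ ∃ c : ℝ, 0 < c ∧ ∀ lam : ℝ, 0 < lam →
      volume {x ∈ Set.Ico (-π) π |
          lam < ⨆ p : {p : ℝ // 1 < p},
            (∑' j : ℕ, ((b j - a j) / (|x - (a j + b j) / 2| + (b j - a j))) ^ (p.1 / (p.1 - 1))) /
              (p.1 * Real.log (Real.log (p.1 + 2)))} ≤
        ENNReal.ofReal (C * Real.exp (-c * lam)) := by
  exact stmt14' a b hab hsub hdisj
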